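/- Let 0 < l < L. There exists s₁ > 0 such that for all s ∈ (0, s₁] and all x ∈ (−L−l−s, −L−l/200) ∪ (L+l/200, L+l+s), one has (e^{sΔ}f₀)(x) ≥ f₀(x) + s/(5l²). -/

import Mathlib

open Set MeasureTheory Real Filter Topology

/-- The heat semigroup on ℝ:
`(e^{sΔ}g)(x) = (4πs)^{−1/2} ∫ e^{−y²/(4s)} g(x−y) dy` for `s > 0`
(extended by the identity for `s ≤ 0`). -/
noncomputable def heatSG (s : ℝ) (g : ℝ → ℝ) (x : ℝ) : ℝ :=
  if s ≤ 0 then g x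
  else (4 * Real.pi * s) ^ (-(1 : ℝ) / 2) * ∫ y : ℝ, Real.exp (-(y ^ 2) / (4 * s)) * g (x - y)

/-- The smoothed step function `h` with transition width `2l`. -/
noncomputable def hFun (l : ℝ) (x : ℝ) : ℝ :=
  if x < -l then 0
  else if x ≤ 0 then (1 / 2) * ((x + l) / l) ^ 2
  else if x ≤ l then 1 - (1 / 2) * ((l - x) / l) ^ 2
  else 1

/-- The smoothed indicator `f₀` of `[−L,L]` with transition regions of width `2l`:
`f₀ = 1` on `[−L+l, L−l]`, `f₀(x) = h(x+L)` on `[−L−l, −L+l]`,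
`f₀(x) = h(L−x)` on `[L−l, L+l]`, and `f₀ = 0` for `|x| ≥ L+l`. -/
noncomputable def f0 (l L : ℝ) (x : ℝ) : ℝ :=
  if x < -(L + l) then 0
  else if x < -L + l then hFun l (x + L)
  else if x ≤ L - l then 1
  else if x ≤ L + l then hFun l (L - x)
  else 0

lemma aux_tendsto_mul_exp (b : ℝ) (hb : 0 < b) :
    Tendsto (fun y : ℝ => y * Real.exp (-b * y ^ 2)) atTop (𝓝 0) := by
  have h1 : Tendsto (fun y : ℝ => y - b * y ^ 2) atTop atBot := by
    have : (fun y : ℝ => y - b * y ^ 2) = fun y : ℝ => y * (1 - b * y) := by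
      funext y; ring
    rw [this]
    exact tendsto_id.atTop_mul_atBot₀
      (tendsto_atBot_add_const_left _ 1
        (tendsto_neg_atTop_atBot.comp (tendsto_id.const_mul_atTop hb)))
  have h2 : Tendsto (fun y : ℝ => Real.exp (y - b * y ^ 2)) atTop (𝓝 0) :=
    Real.tendsto_exp_atBot.comp h1
  apply squeeze_zero_norm' _ h2
  filter_upwards [eventually_ge_atTop (0 : ℝ)] with y hy
  rw [Real.norm_eq_abs, abs_of_nonneg (by positivity), Real.exp_sub]
  rw [div_eq_mul_inv, ← Real.exp_neg]
  have hy1 : y ≤ Real.exp y := le_trans (by linarith) (Real.add_one_le_exp y)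
  calc y * Real.exp (-b * y ^ 2) ≤ Real.exp y * Real.exp (-b*y^2) := by
        apply mul_le_mul_of_nonneg_right hy1 (Real.exp_pos _).le
    _ = Real.exp y * Real.exp (-(b*y^2)) := by ring_nf


lemma aux_tendsto_exp (b : ℝ) (hb : 0 < b) :
    Tendsto (fun y : ℝ => Real.exp (-b * y ^ 2)) atTop (𝓝 0) := by
  apply Real.tendsto_exp_atBot.comp
  have := (tendsto_neg_atTop_atBot.comp
    ((tendsto_pow_atTop (two_ne_zero)).const_mul_atTop hb))
  simpa [Function.comp_def, neg_mul] using this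

lemma aux_integrable_sq (b : ℝ) (hb : 0 < b) :
    Integrable (fun y : ℝ => y ^ 2 * Real.exp (-b * y ^ 2)) := by
  have := integrable_rpow_mul_exp_neg_mul_sq hb (s := 2) (by norm_num)
  have h2 : ∀ y : ℝ, y ^ (2 : ℝ) = y ^ 2 := fun y => by
    rw [show (2:ℝ) = ((2:ℕ):ℝ) by norm_num, Real.rpow_natCast]
  simpa only [h2] using this

lemma aux_hasDeriv1 (b : ℝ) (hb : b ≠ 0) (x : ℝ) :
    HasDerivAt (fun y : ℝ => -(2*b)⁻¹ * Real.exp (-b * y ^ 2))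
      (x * Real.exp (-b * x ^ 2)) x := by
  have h := (((hasDerivAt_pow 2 x).const_mul (-b)).exp).const_mul (-(2*b)⁻¹)
  refine h.congr_deriv ?_
  field_simp
  ring

lemma aux_I1pos (b : ℝ) (hb : 0 < b) :
    ∫ y in Ioi (0:ℝ), y * Real.exp (-b * y ^ 2) = (2*b)⁻¹ := by
  have := integral_Ioi_of_hasDerivAt_of_tendsto'
    (f := fun y : ℝ => -(2*b)⁻¹ * Real.exp (-b * y ^ 2))
    (f' := fun y : ℝ => y * Real.exp (-b * y ^ 2)) (a := 0) (m := 0)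
    (fun x _ => aux_hasDeriv1 b hb.ne' x)
    ((integrable_mul_exp_neg_mul_sq hb).integrableOn)
    ?_
  · rw [this]; simp
  · have := (aux_tendsto_exp b hb).const_mul (-(2*b)⁻¹)
    simpa using this

lemma aux_hasDeriv2 (b : ℝ) (x : ℝ) :
    HasDerivAt (fun y : ℝ => y * Real.exp (-b * y ^ 2))
      (Real.exp (-b * x ^ 2) - 2*b*(x^2 * Real.exp (-b * x ^ 2))) x := by
  have h := (hasDerivAt_id x).mul (((hasDerivAt_pow 2 x).const_mul (-b)).exp)
  refine h.congr_deriv ?_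
  simp only [id]
  ring

lemma aux_I2pos (b : ℝ) (hb : 0 < b) :
    ∫ y in Ioi (0:ℝ), y ^ 2 * Real.exp (-b * y ^ 2) = Real.sqrt (π/b) / (4*b) := by
  have h0 := integral_Ioi_of_hasDerivAt_of_tendsto'
    (f := fun y : ℝ => y * Real.exp (-b * y ^ 2))
    (f' := fun y : ℝ => Real.exp (-b * y ^ 2) - 2*b*(y^2 * Real.exp (-b * y ^ 2)))
    (a := 0) (m := 0)
    (fun x _ => aux_hasDeriv2 b x)
    (((integrable_exp_neg_mul_sq hb).sub
      ((aux_integrable_sq b hb).const_mul (2*b))).integrableOn)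
    (aux_tendsto_mul_exp b hb)
  rw [integral_sub ((integrable_exp_neg_mul_sq hb).integrableOn)
      (((aux_integrable_sq b hb).const_mul (2*b)).integrableOn),
    integral_const_mul, integral_gaussian_Ioi] at h0
  simp only [zero_mul, sub_zero, mul_zero] at h0
  have hb' : (4:ℝ)*b ≠ 0 := by positivity
  field_simp at h0 ⊢
  linarith

lemma aux_I1 (b : ℝ) (hb : 0 < b) :
    ∫ y : ℝ, y * Real.exp (-b * y ^ 2) = 0 := by
  have hi := integrable_mul_exp_neg_mul_sq hb
  have h2 := integral_comp_neg_Iic (0:ℝ) (fun y : ℝ => y * Real.exp (-b * y ^ 2))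
  simp only [neg_zero, neg_sq] at h2
  have h4 : (fun a : ℝ => a * Real.exp (-b*a^2)) = fun a => -((-a) * Real.exp (-b*a^2)) := by
    funext a; ring
  have h3 : ∫ y in Iic (0:ℝ), y * Real.exp (-b * y ^ 2) = -(2*b)⁻¹ := by
    rw [h4, integral_neg, h2, aux_I1pos b hb]
  rw [← intervalIntegral.integral_Iic_add_Ioi (hi.integrableOn) (hi.integrableOn), aux_I1pos b hb, h3]
  ring


lemma hFun_nonneg (l x : ℝ) (hl : 0 < l) : 0 ≤ hFun l x := by
  unfold hFun
  split_ifs with h1 h2 h3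
  · exact le_refl 0
  · positivity
  · have : |l - x| ≤ l := by
      rw [abs_le]; constructor <;> linarith
    have h4 : ((l-x)/l)^2 ≤ 1 := by
      rw [div_pow, div_le_one (by positivity)]
      calc (l-x)^2 = |l-x|^2 := (sq_abs _).symm
        _ ≤ l^2 := by gcongr <;> positivity
    linarith
  · norm_num

lemma hFun_le_one (l x : ℝ) (hl : 0 < l) : hFun l x ≤ 1 := by
  unfold hFun
  split_ifs with h1 h2 h3
  · norm_num
  · have : |x + l| ≤ l := by rw [abs_le]; constructor <;> linarith
    have h4 : ((x+l)/l)^2 ≤ 1 := by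
      rw [div_pow, div_le_one (by positivity)]
      calc (x+l)^2 = |x+l|^2 := (sq_abs _).symm
        _ ≤ l^2 := by gcongr <;> positivity
    linarith
  · nlinarith [sq_nonneg ((l-x)/l)]
  · exact le_refl 1

lemma f0_nonneg (l L x : ℝ) (hl : 0 < l) : 0 ≤ f0 l L x := by
  unfold f0
  split_ifs
  · norm_num
  · exact hFun_nonneg _ _ hl
  · norm_num
  · exact hFun_nonneg _ _ hl
  · norm_num

lemma f0_le_one (l L x : ℝ) (hl : 0 < l) : f0 l L x ≤ 1 := by
  unfold f0
  split_ifs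
  · norm_num
  · exact hFun_le_one _ _ hl
  · norm_num
  · exact hFun_le_one _ _ hl
  · norm_num

lemma hFun_measurable (l : ℝ) : Measurable (hFun l) := by
  unfold hFun
  apply Measurable.ite (measurableSet_lt measurable_id measurable_const) measurable_const
  apply Measurable.ite (measurableSet_le measurable_id measurable_const)
    (((measurable_id.add_const l).div_const l).pow_const 2 |>.const_mul (1/2))
  apply Measurable.ite (measurableSet_le measurable_id measurable_const)
    (measurable_const.sub ((((measurable_const.sub measurable_id).div_const l).pow_const 2).const_mul (1/2)))
  exact measurable_const

lemma f0_measurable (l L : ℝ) : Measurable (f0 l L) := by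
  unfold f0
  apply Measurable.ite (measurableSet_lt measurable_id measurable_const) measurable_const
  apply Measurable.ite (measurableSet_lt measurable_id measurable_const)
    ((hFun_measurable l).comp (measurable_id.add_const L))
  apply Measurable.ite (measurableSet_le measurable_id measurable_const) measurable_const
  apply Measurable.ite (measurableSet_le measurable_id measurable_const)
    ((hFun_measurable l).comp (measurable_const.sub measurable_id))
  exact measurable_const

lemma f0_even (l L x : ℝ) (hl : 0 < l) (hlL : l < L) : f0 l L (-x) = f0 l L x := by
  unfold f0
  split_ifs <;> first
    | rfl
    | (exfalso; linarith)
    | (congr 1; ring)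

lemma f0_eq_right (l L z : ℝ) (hl : 0 < l) (hlL : l < L) (hz : L ≤ z) :
    f0 l L z = (max (L + l - z) 0) ^ 2 / (2 * l ^ 2) := by
  unfold f0 hFun
  rcases le_or_gt z (L + l) with h | h
  · rw [if_neg (by linarith), if_neg (by linarith), if_neg (by linarith), if_pos (by linarith)]
    rw [if_neg (by linarith), if_pos (by linarith)]
    rw [max_eq_left (by linarith)]
    field_simp
    ring
  · rw [if_neg (by linarith), if_neg (by linarith), if_neg (by linarith), if_neg (by linarith)]
    rw [max_eq_right (by linarith)]
    norm_num

set_option maxHeartbeats 4000000 in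
lemma key_right (l L s : ℝ) (hl : 0 < l) (hlL : l < L) (hs : 0 < s)
    (hs1 : s ≤ 1/36) (hs2 : s ≤ l) (hs3 : s ≤ l^2/10^12) (x : ℝ)
    (hx1 : L + l/200 < x) (hx2 : x < L + l + s) :
    f0 l L x + s / (5 * l ^ 2) ≤ heatSG s (f0 l L) x := by
  set b : ℝ := (4*s)⁻¹ with hbdef
  have hb : 0 < b := by positivity
  set K : ℝ → ℝ := fun y => Real.exp (-b * y^2) with hKdef
  set c : ℝ := (4 * Real.pi * s) ^ (-(1 : ℝ) / 2) with hcdef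
  set u : ℝ := L + l - x with hudef
  set a : ℝ := l/200 with hadef
  have ha : 0 < a := by positivity
  have hc : 0 < c := Real.rpow_pos_of_pos (by positivity) _
  have hKpos : ∀ y, 0 < K y := fun y => Real.exp_pos _
  have hKle1 : ∀ y, K y ≤ 1 := fun y => by
    rw [hKdef]; apply Real.exp_le_one_iff.mpr; nlinarith [sq_nonneg y]
  -- heatSG formula
  have h4pis : (0:ℝ) < 4 * Real.pi * s := by positivity
  have hHS : heatSG s (f0 l L) x = c * ∫ y : ℝ, K y * f0 l L (x - y) := by
    unfold heatSG
    rw [if_neg (not_le.mpr hs)]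
    have harg : ∀ y : ℝ, -(y^2) / (4*s) = -b * y^2 := fun y => by
      rw [hbdef]; field_simp
    congr 1
    refine integral_congr_ae (Filter.Eventually.of_forall fun y => ?_)
    show Real.exp (-(y^2)/(4*s)) * f0 l L (x - y) = K y * f0 l L (x - y)
    rw [harg y]
  -- basic constants
  have hsqrt4 : Real.sqrt (Real.pi / b) = Real.sqrt (4 * Real.pi * s) := by
    congr 1
    rw [hbdef]
    field_simp
  have hcmul : c * Real.sqrt (Real.pi / b) = 1 := by
    rw [hsqrt4, hcdef, show (-(1:ℝ)/2) = -(1/2) by norm_num,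
      Real.rpow_neg h4pis.le, Real.sqrt_eq_rpow]
    exact inv_mul_cancel₀ (by
      apply ne_of_gt
      exact Real.rpow_pos_of_pos h4pis _)
  have hs4b : (4*b)⁻¹ = s := by rw [hbdef]; field_simp
  have h2binv : (2*b)⁻¹ = 2*s := by rw [hbdef]; field_simp; ring
  have hsqs : Real.sqrt s ≤ 1/6 := by
    calc Real.sqrt s ≤ Real.sqrt (1/36) := Real.sqrt_le_sqrt hs1
      _ = 1/6 := by
          rw [show (1/36:ℝ) = (1/6)^2 by norm_num, Real.sqrt_sq (by norm_num)]
  have hcbound : c * Real.sqrt s ≤ 1/2 := by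
    have h1 : Real.sqrt (4*Real.pi*s) ≥ 2 * Real.sqrt s := by
      have : Real.sqrt (4*s) = 2 * Real.sqrt s := by
        rw [show (4:ℝ)*s = 2^2*s by norm_num, Real.sqrt_mul (by positivity),
          Real.sqrt_sq (by norm_num)]
      rw [← this]
      apply Real.sqrt_le_sqrt
      nlinarith [Real.pi_gt_three]
    have h2 : c * Real.sqrt (4*Real.pi*s) = 1 := by rw [← hsqrt4]; exact hcmul
    nlinarith [Real.sqrt_nonneg s, hc]
  have hcs2 : c * s^2 ≤ s/12 := by
    have h1 : Real.sqrt s * Real.sqrt s = s := Real.mul_self_sqrt hs.le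
    have h2 : c * Real.sqrt s ≤ 1/2 := hcbound
    have h3 : 0 < Real.sqrt s := Real.sqrt_pos.mpr hs
    have e1 : (c * Real.sqrt s) * (Real.sqrt s * s) = c * s^2 := by
      rw [show (c * Real.sqrt s) * (Real.sqrt s * s)
        = c * ((Real.sqrt s * Real.sqrt s) * s) from by ring, h1]
      ring
    have e2 : (c * Real.sqrt s) * (Real.sqrt s * s) ≤ (1/2) * ((1/6) * s) := by
      apply mul_le_mul h2 _ (by positivity) (by norm_num)
      apply mul_le_mul hsqs le_rfl hs.le (by norm_num)
    rw [e1] at e2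
    linarith
  have hcs3 : c * s^3 ≤ s/12 := by
    calc c * s^3 = (c * s^2) * s := by ring
      _ ≤ (s/12) * 1 := by
          apply mul_le_mul hcs2 (by linarith) hs.le (by positivity)
      _ ≤ s/12 := by linarith
  -- integrability
  have iK : Integrable K := integrable_exp_neg_mul_sq hb
  have iyK : Integrable (fun y : ℝ => y * K y) := integrable_mul_exp_neg_mul_sq hb
  have iy2K : Integrable (fun y : ℝ => y^2 * K y) := aux_integrable_sq b hb
  have iquadK : Integrable (fun y : ℝ => K y * (u+y)^2) := by
    have : (fun y : ℝ => K y * (u+y)^2)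
        = fun y : ℝ => u^2 * K y + 2*u*(y*K y) + y^2*K y := by
      funext y; ring
    rw [this]
    exact ((iK.const_mul _).add (iyK.const_mul _)).add iy2K
  have hKmeas : Measurable K := by
    apply Real.measurable_exp.comp
    exact (measurable_id.pow_const 2).const_mul (-b)
  have if0 : Integrable (fun y : ℝ => K y * f0 l L (x - y)) := by
    have := Integrable.bdd_mul (f := fun y : ℝ => f0 l L (x - y)) iK
      (((f0_measurable l L).comp (measurable_const.sub measurable_id)).aestronglyMeasurable)
      (c := 1) (Filter.Eventually.of_forall fun y => by
        rw [Real.norm_eq_abs, abs_of_nonneg (f0_nonneg l L _ hl)]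
        exact f0_le_one l L _ hl)
    simpa [mul_comm] using this
  have iqmaxK : Integrable (fun y : ℝ => K y * (max (u+y) 0)^2) := by
    apply iquadK.mono'
    · apply Measurable.aestronglyMeasurable
      exact hKmeas.mul (((measurable_const.add measurable_id).max measurable_const).pow_const 2)
    · refine Filter.Eventually.of_forall fun y => ?_
      rw [Real.norm_eq_abs, abs_mul, abs_of_pos (hKpos y), abs_of_nonneg (by positivity)]
      have hmx : (max (u+y) 0)^2 ≤ (u+y)^2 := by
        rcases le_or_gt (u+y) 0 with h | h
        · rw [max_eq_right h]; simpa using sq_nonneg (u+y)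
        · rw [max_eq_left h.le]
      exact mul_le_mul_of_nonneg_left hmx (hKpos y).le
  have iindK : Integrable (fun y : ℝ =>
      Set.indicator (Ioi (x - L)) (fun y => K y * (u+y)^2) y) :=
    iquadK.indicator measurableSet_Ioi
  -- lower bound function
  set G : ℝ → ℝ := fun y =>
    (K y * (max (u+y) 0)^2 - Set.indicator (Ioi (x - L)) (fun y => K y * (u+y)^2) y) / (2*l^2)
    with hGdef
  have iG : Integrable G := (iqmaxK.sub iindK).div_const _
  have hGle : ∀ y, G y ≤ K y * f0 l L (x - y) := by
    intro y
    simp only [hGdef]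
    by_cases hy : y ∈ Ioi (x - L)
    · rw [Set.indicator_of_mem hy]
      have hmx : (max (u+y) 0)^2 ≤ (u+y)^2 := by
        rcases le_or_gt (u+y) 0 with h | h
        · rw [max_eq_right h]; simpa using sq_nonneg (u+y)
        · rw [max_eq_left h.le]
      have h1 : K y * (max (u+y) 0)^2 - K y * (u+y)^2 ≤ 0 := by
        nlinarith [(hKpos y).le]
      have h2 : (0:ℝ) < 2*l^2 := by positivity
      apply le_trans (div_nonpos_iff.mpr (Or.inr ⟨h1, h2.le⟩))
      exact mul_nonneg (hKpos y).le (f0_nonneg l L _ hl)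
    · rw [Set.indicator_of_notMem hy]
      have hyle : y ≤ x - L := not_lt.mp (fun h => hy h)
      have hzL : L ≤ x - y := by linarith
      have hfz : f0 l L (x - y) = (max (L + l - (x-y)) 0)^2 / (2*l^2) :=
        f0_eq_right l L (x-y) hl hlL hzL
      have harg2 : L + l - (x - y) = u + y := by rw [hudef]; ring
      rw [hfz, harg2]
      rw [sub_zero]
      rw [mul_div_assoc]
  -- value of f0 at x
  have hf0x : f0 l L x = (max u 0)^2 / (2*l^2) := by
    rw [f0_eq_right l L x hl hlL (by linarith), hudef]
  -- integral of G
  have hGint : ∫ y, G y = ((∫ y, K y * (max (u+y) 0)^2)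
      - ∫ y in Ioi (x - L), K y * (u+y)^2) / (2*l^2) := by
    simp only [hGdef]
    rw [integral_div, integral_sub iqmaxK iindK, integral_indicator measurableSet_Ioi]
  -- MAIN LOWER BOUND
  have hmain : (max u 0)^2 + s/2 ≤ c * ∫ y, K y * (max (u+y) 0)^2 := by
    have hu_gt : -s < u := by rw [hudef]; linarith
    rcases le_or_gt 0 u with hu0 | hu0
    · -- case u ≥ 0
      have hpt : ∀ y : ℝ, u^2 * K y + 2*u*(y*K y)
          + Set.indicator (Ioi (0:ℝ)) (fun y => y^2 * K y) y ≤ K y * (max (u+y) 0)^2 := by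
        intro y
        rcases lt_or_ge 0 y with hy | hy
        · rw [Set.indicator_of_mem (show y ∈ Ioi (0:ℝ) from hy)]
          rw [max_eq_left (by linarith)]
          apply le_of_eq
          ring
        · rw [Set.indicator_of_notMem (by simpa using hy)]
          rcases le_or_gt 0 (u+y) with h2 | h2
          · rw [max_eq_left h2]
            nlinarith [(hKpos y).le, sq_nonneg y]
          · rw [max_eq_right h2.le]
            have h3 : u^2 + 2*u*y ≤ 0 := by nlinarith
            nlinarith [(hKpos y).le]
      have i1 : Integrable (fun y : ℝ => u^2 * K y) := iK.const_mul _
      have i2 : Integrable (fun y : ℝ => 2*u*(y*K y)) := iyK.const_mul _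
      have i12 : Integrable (fun y : ℝ => u^2 * K y + 2*u*(y*K y)) := i1.add i2
      have i3 : Integrable (fun y : ℝ =>
          Set.indicator (Ioi (0:ℝ)) (fun y => y^2 * K y) y) :=
        iy2K.indicator measurableSet_Ioi
      have isum : Integrable (fun y : ℝ => u^2 * K y + 2*u*(y*K y)
          + Set.indicator (Ioi (0:ℝ)) (fun y => y^2 * K y) y) := i12.add i3
      have hint : (∫ y : ℝ, (u^2 * K y + 2*u*(y*K y)
          + Set.indicator (Ioi (0:ℝ)) (fun y => y^2 * K y) y))
          = u^2 * Real.sqrt (Real.pi/b) + Real.sqrt (Real.pi/b) / (4*b) := by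
        rw [integral_add i12 i3,
          integral_add i1 i2,
          integral_const_mul, integral_const_mul,
          integral_indicator measurableSet_Ioi]
        rw [hKdef]
        rw [integral_gaussian, aux_I1 b hb, aux_I2pos b hb]
        ring
      have h5 := integral_mono isum iqmaxK hpt
      rw [hint] at h5
      have h6 := mul_le_mul_of_nonneg_left h5 hc.le
      have e : c * (u^2 * Real.sqrt (Real.pi/b) + Real.sqrt (Real.pi/b) / (4*b))
          = u^2 * (c * Real.sqrt (Real.pi/b)) + (c * Real.sqrt (Real.pi/b)) * (4*b)⁻¹ := by
        ring
      rw [e, hcmul, hs4b] at h6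
      rw [max_eq_left hu0]
      exact le_trans (by linarith : u^2 + s/2 ≤ u^2*1 + 1*s) h6
    · -- case u < 0
      have hpt : ∀ y : ℝ, Set.indicator (Ioi s) (fun y => y^2 * K y - 2*s*(y*K y)) y
          ≤ K y * (max (u+y) 0)^2 := by
        intro y
        rcases lt_or_ge s y with hy | hy
        · rw [Set.indicator_of_mem (show y ∈ Ioi s from hy)]
          have h1 : 0 < y - s := by linarith
          have h2 : y - s ≤ u + y := by linarith
          rw [max_eq_left (by linarith)]
          have h3 : (y-s)^2 ≤ (u+y)^2 := by nlinarith
          calc y^2 * K y - 2*s*(y*K y) = K y * (y^2 - 2*s*y) := by ring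
            _ ≤ K y * (y-s)^2 := by
                apply mul_le_mul_of_nonneg_left _ (hKpos y).le
                nlinarith [sq_nonneg s]
            _ ≤ K y * (u+y)^2 := mul_le_mul_of_nonneg_left h3 (hKpos y).le
        · rw [Set.indicator_of_notMem (by simpa using hy)]
          positivity
      have isum2 : Integrable (fun y : ℝ =>
          Set.indicator (Ioi s) (fun y => y^2 * K y - 2*s*(y*K y)) y) :=
        (iy2K.sub (iyK.const_mul _)).indicator measurableSet_Ioi
      have h5 := integral_mono isum2 iqmaxK hpt
      have hint : (∫ y : ℝ, Set.indicator (Ioi s) (fun y => y^2 * K y - 2*s*(y*K y)) y)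
          = (∫ y in Ioi s, y^2 * K y) - 2*s*(∫ y in Ioi s, y * K y) := by
        rw [integral_indicator measurableSet_Ioi,
          integral_sub iy2K.integrableOn ((iyK.const_mul _).integrableOn),
          integral_const_mul]
      have hA : Real.sqrt (Real.pi/b)/(4*b) - s^3 ≤ ∫ y in Ioi s, y^2 * K y := by
        have hsplit : (∫ y in Ioi (0:ℝ), y^2 * K y)
            = (∫ y in Ioc (0:ℝ) s, y^2 * K y) + ∫ y in Ioi s, y^2 * K y := by
          rw [← setIntegral_union (Ioc_disjoint_Ioi le_rfl) measurableSet_Ioi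
            iy2K.integrableOn iy2K.integrableOn, Ioc_union_Ioi_eq_Ioi hs.le]
        have hIoc : (∫ y in Ioc (0:ℝ) s, y^2 * K y) ≤ s^3 := by
          have hconst : (∫ y in Ioc (0:ℝ) s, y^2 * K y) ≤ ∫ _ in Ioc (0:ℝ) s, s^2 := by
            apply setIntegral_mono_on iy2K.integrableOn
              ((integrableOn_const_iff).mpr (Or.inr (by rw [Real.volume_Ioc]; exact ENNReal.ofReal_lt_top)))
              measurableSet_Ioc
            intro y hy
            have h1 := hKle1 y
            have h2 := (hKpos y).le
            have h3 : y^2 ≤ s^2 := by nlinarith [hy.1, hy.2]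
            nlinarith [sq_nonneg y]
          rw [setIntegral_const, measureReal_def, Real.volume_Ioc] at hconst
          rw [ENNReal.toReal_ofReal (by linarith)] at hconst
          have : (s - 0) • s^2 = s^3 := by ring_nf
          rw [this] at hconst
          exact hconst
        have h2pos := aux_I2pos b hb
        have hKrw : (∫ y in Ioi (0:ℝ), y^2 * K y)
            = ∫ y in Ioi (0:ℝ), y^2 * Real.exp (-b * y^2) := by rw [hKdef]
        rw [hKrw, h2pos] at hsplit
        linarith
      have hB : (∫ y in Ioi s, y * K y) ≤ 2*s := by
        have hle1 : (∫ y in Ioi s, y * K y) ≤ ∫ y in Ioi (0:ℝ), y * K y := by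
          apply setIntegral_mono_set iyK.integrableOn
          · rw [Filter.EventuallyLE]
            apply (ae_restrict_iff' measurableSet_Ioi).mpr
            refine Filter.Eventually.of_forall fun y hy => ?_
            have : (0:ℝ) < y := hy
            positivity
          · exact (Ioi_subset_Ioi hs.le).eventuallyLE
        have hKrw : (∫ y in Ioi (0:ℝ), y * K y)
            = ∫ y in Ioi (0:ℝ), y * Real.exp (-b * y^2) := by rw [hKdef]
        rw [hKrw, aux_I1pos b hb] at hle1
        calc (∫ y in Ioi s, y * K y) ≤ (2*b)⁻¹ := hle1
          _ = 2*s := h2binv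
      rw [hint] at h5
      set X : ℝ := ∫ y in Ioi s, y^2 * K y with hX
      set Y : ℝ := ∫ y in Ioi s, y * K y with hY
      have e : c * (Real.sqrt (Real.pi/b)/(4*b))
          = (c * Real.sqrt (Real.pi/b)) * (4*b)⁻¹ := by ring
      rw [hcmul, hs4b, one_mul] at e
      have h6 := mul_le_mul_of_nonneg_left h5 hc.le
      have p1 : 0 ≤ c * (X - (Real.sqrt (Real.pi/b)/(4*b) - s^3)) :=
        mul_nonneg hc.le (by linarith)
      have p2 : 0 ≤ (2*s) * (c * (2*s - Y)) :=
        mul_nonneg (by linarith) (mul_nonneg hc.le (by linarith))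
      rw [max_eq_right hu0.le]
      have hgoal : s/2 ≤ c * (X - 2*s*Y) := by nlinarith [hcs3, hcs2, e, p1, p2]
      calc (0:ℝ)^2 + s/2 = s/2 := by ring
        _ ≤ c * (X - 2*s*Y) := hgoal
        _ ≤ c * ∫ y, K y * (max (u+y) 0)^2 := h6
  -- ERROR BOUND
  have herr : c * (∫ y in Ioi (x - L), K y * (u+y)^2) ≤ s/10 := by
    set b' : ℝ := (8*s)⁻¹ with hb'def
    have hb' : 0 < b' := by positivity
    have hbb' : b = 2*b' := by rw [hbdef, hb'def]; field_simp; ring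
    have hiy2K' : Integrable (fun y : ℝ => y^2 * Real.exp (-b' * y^2)) :=
      aux_integrable_sq b' hb'
    have hual : u ≤ l - a := by rw [hudef, hadef]; linarith
    have hE1 : (∫ y in Ioi (x - L), K y * (u+y)^2) ≤ ∫ y in Ioi a, K y * (u+y)^2 := by
      apply setIntegral_mono_set iquadK.integrableOn
        (Filter.Eventually.of_forall fun y => by positivity)
      exact (Ioi_subset_Ioi (by linarith)).eventuallyLE
    have hE2 : (∫ y in Ioi a, K y * (u+y)^2)
        ≤ ∫ y in Ioi a, Real.exp (-b'*a^2) * (201^2 * (y^2 * Real.exp (-b' * y^2))) := by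
      apply setIntegral_mono_on iquadK.integrableOn
        (((hiy2K'.const_mul _).const_mul _).integrableOn) measurableSet_Ioi
      intro y hy
      have hay : a < y := hy
      have hy0 : 0 < y := lt_trans ha hay
      have hK2 : K y ≤ Real.exp (-b'*a^2) * Real.exp (-b'*y^2) := by
        rw [hKdef, ← Real.exp_add]
        apply Real.exp_le_exp.mpr
        have : a^2 ≤ y^2 := by nlinarith
        rw [hbb']
        nlinarith [hb'.le]
      have hu2 : (u+y)^2 ≤ 201^2 * y^2 := by
        have hb1 : u + y ≤ 201 * y := by
          have : u ≤ 200 * a := by rw [hadef] at hual ⊢; linarith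
          nlinarith
        have hb2 : -(201*y) ≤ u + y := by
          have h1 : -s < u := by rw [hudef]; linarith
          have h2 : s ≤ 200 * a := by rw [hadef]; linarith
          nlinarith
        have := sq_le_sq' hb2 hb1
        calc (u+y)^2 ≤ (201*y)^2 := this
          _ = 201^2 * y^2 := by ring
      calc K y * (u+y)^2 ≤ (Real.exp (-b'*a^2) * Real.exp (-b'*y^2)) * (201^2 * y^2) := by
            apply mul_le_mul hK2 hu2 (by positivity) (by positivity)
        _ = Real.exp (-b'*a^2) * (201^2 * (y^2 * Real.exp (-b' * y^2))) := by ring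
    have hE3 : (∫ y in Ioi a, Real.exp (-b'*a^2) * (201^2 * (y^2 * Real.exp (-b' * y^2))))
        = Real.exp (-b'*a^2) * 201^2 * ∫ y in Ioi a, y^2 * Real.exp (-b' * y^2) := by
      rw [integral_const_mul, integral_const_mul]; ring
    have hE4 : (∫ y in Ioi a, y^2 * Real.exp (-b' * y^2))
        ≤ Real.sqrt (Real.pi/b') / (4*b') := by
      rw [← aux_I2pos b' hb']
      apply setIntegral_mono_set hiy2K'.integrableOn
        (Filter.Eventually.of_forall fun y => by positivity)
      exact (Ioi_subset_Ioi ha.le).eventuallyLE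
    have hcb' : c * Real.sqrt (Real.pi/b') ≤ 3/2 := by
      have h8 : Real.pi/b' = 2 * (4*Real.pi*s) := by rw [hb'def]; field_simp; ring
      have hsq2 : Real.sqrt 2 ≤ 3/2 := by
        rw [show (3:ℝ)/2 = Real.sqrt ((3/2)^2) from (Real.sqrt_sq (by norm_num)).symm]
        apply Real.sqrt_le_sqrt; norm_num
      have : Real.sqrt (Real.pi/b') = Real.sqrt 2 * Real.sqrt (4*Real.pi*s) := by
        rw [h8, Real.sqrt_mul (by norm_num)]
      rw [this]
      have h2 : c * Real.sqrt (4*Real.pi*s) = 1 := by rw [← hsqrt4]; exact hcmul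
      calc c * (Real.sqrt 2 * Real.sqrt (4*Real.pi*s))
          = Real.sqrt 2 * (c * Real.sqrt (4*Real.pi*s)) := by ring
        _ = Real.sqrt 2 := by rw [h2, mul_one]
        _ ≤ 3/2 := hsq2
    have h4b' : (4*b')⁻¹ = 2*s := by rw [hb'def]; field_simp; ring
    have hexp : Real.exp (-b'*a^2) ≤ 8*s/a^2 := by
      have ht : 0 < b'*a^2 := by positivity
      have h1 : b'*a^2 ≤ Real.exp (b'*a^2) :=
        le_trans (by linarith) (Real.add_one_le_exp _)
      have h2 : Real.exp (-(b'*a^2)) ≤ (b'*a^2)⁻¹ := by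
        rw [Real.exp_neg]
        exact inv_anti₀ ht h1
      have h3 : (b'*a^2)⁻¹ = 8*s/a^2 := by
        rw [hb'def]; field_simp
      calc Real.exp (-b'*a^2) = Real.exp (-(b'*a^2)) := by ring_nf
        _ ≤ (b'*a^2)⁻¹ := h2
        _ = 8*s/a^2 := h3
    -- assemble
    have hJ : (∫ y in Ioi (x - L), K y * (u+y)^2)
        ≤ Real.exp (-b'*a^2) * 201^2 * (Real.sqrt (Real.pi/b') / (4*b')) := by
      calc (∫ y in Ioi (x - L), K y * (u+y)^2)
          ≤ ∫ y in Ioi a, K y * (u+y)^2 := hE1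
        _ ≤ ∫ y in Ioi a, Real.exp (-b'*a^2) * (201^2 * (y^2 * Real.exp (-b' * y^2))) := hE2
        _ = Real.exp (-b'*a^2) * 201^2 * ∫ y in Ioi a, y^2 * Real.exp (-b' * y^2) := hE3
        _ ≤ Real.exp (-b'*a^2) * 201^2 * (Real.sqrt (Real.pi/b') / (4*b')) := by
            apply mul_le_mul_of_nonneg_left hE4 (by positivity)
    have hJpos : (0:ℝ) ≤ ∫ y in Ioi (x - L), K y * (u+y)^2 :=
      setIntegral_nonneg measurableSet_Ioi (fun y _ => by positivity)
    have step1 : c * (∫ y in Ioi (x - L), K y * (u+y)^2)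
        ≤ Real.exp (-b'*a^2) * 201^2 * ((c * Real.sqrt (Real.pi/b')) * (2*s)) := by
      calc c * (∫ y in Ioi (x - L), K y * (u+y)^2)
          ≤ c * (Real.exp (-b'*a^2) * 201^2 * (Real.sqrt (Real.pi/b') / (4*b'))) :=
            mul_le_mul_of_nonneg_left hJ hc.le
        _ = Real.exp (-b'*a^2) * 201^2 * ((c * Real.sqrt (Real.pi/b')) * (4*b')⁻¹) := by
            ring
        _ = Real.exp (-b'*a^2) * 201^2 * ((c * Real.sqrt (Real.pi/b')) * (2*s)) := by
            rw [h4b']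
    have step2 : Real.exp (-b'*a^2) * 201^2 * ((c * Real.sqrt (Real.pi/b')) * (2*s))
        ≤ (8*s/a^2) * 201^2 * ((3/2) * (2*s)) := by
      have hcspos : 0 ≤ c * Real.sqrt (Real.pi/b') :=
        mul_nonneg hc.le (Real.sqrt_nonneg _)
      have hin : (c * Real.sqrt (Real.pi/b')) * (2*s) ≤ (3/2) * (2*s) :=
        mul_le_mul_of_nonneg_right hcb' (by linarith)
      have hin2 : 0 ≤ (c * Real.sqrt (Real.pi/b')) * (2*s) :=
        mul_nonneg hcspos (by linarith)
      apply mul_le_mul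
      · apply mul_le_mul_of_nonneg_right hexp (by norm_num)
      · exact hin
      · exact hin2
      · positivity
    have hfinal : (8*s/a^2) * 201^2 * ((3/2) * (2*s)) ≤ s/10 := by
      have ha2 : (8*s/a^2) * 201^2 * ((3/2) * (2*s)) = 38784960000 * s^2 / l^2 := by
        rw [hadef]
        field_simp
        ring
      rw [ha2, div_le_div_iff₀ (by positivity) (by norm_num)]
      have hs3' : s * 10^12 ≤ l^2 := by
        rw [le_div_iff₀ (by norm_num)] at hs3
        linarith
      have h1 : 387849600000 * s ≤ l^2 := by linarith
      calc 38784960000 * s^2 * 10 = s * (387849600000 * s) := by ring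
        _ ≤ s * l^2 := mul_le_mul_of_nonneg_left h1 hs.le
    linarith
  -- FINAL ASSEMBLY
  have hle1 : (∫ y, G y) ≤ ∫ y, K y * f0 l L (x - y) := integral_mono iG if0 hGle
  have hle2 := mul_le_mul_of_nonneg_left hle1 hc.le
  rw [hGint] at hle2
  set Jmax : ℝ := ∫ y, K y * (max (u+y) 0)^2 with hJmax
  set Jerr : ℝ := ∫ y in Ioi (x - L), K y * (u+y)^2 with hJerrd
  have heq1 : c * ((Jmax - Jerr)/(2*l^2)) = (c*Jmax - c*Jerr)/(2*l^2) := by ring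
  rw [heq1] at hle2
  have hnum : (max u 0)^2 + 2*s/5 ≤ c*Jmax - c*Jerr := by linarith
  have hl2 : (0:ℝ) < 2*l^2 := by positivity
  have heq2 : f0 l L x + s/(5*l^2) = ((max u 0)^2 + 2*s/5)/(2*l^2) := by
    rw [hf0x]
    field_simp
  rw [hHS, heq2]
  calc ((max u 0)^2 + 2*s/5)/(2*l^2) ≤ (c*Jmax - c*Jerr)/(2*l^2) := by
        exact (div_le_div_iff_of_pos_right hl2).mpr hnum
    _ ≤ c * ∫ y, K y * f0 l L (x - y) := hle2

lemma heatSG_neg (l L s x : ℝ) (hl : 0 < l) (hlL : l < L) :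
    heatSG s (f0 l L) (-x) = heatSG s (f0 l L) x := by
  unfold heatSG
  rcases le_or_gt s 0 with h | h
  · rw [if_pos h, if_pos h, f0_even l L x hl hlL]
  · rw [if_neg (not_le.mpr h), if_neg (not_le.mpr h)]
    congr 1
    rw [← integral_neg_eq_self (fun y : ℝ => Real.exp (-(y^2)/(4*s)) * f0 l L (-x - y)) volume]
    apply integral_congr_ae (Filter.Eventually.of_forall fun y => ?_)
    show Real.exp (-((-y)^2)/(4*s)) * f0 l L (-x - -y) = Real.exp (-(y^2)/(4*s)) * f0 l L (x - y)
    rw [show -x - -y = -(x - y) by ring, f0_even l L (x-y) hl hlL, neg_sq]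

/-- Lemma 4.4: there is `s₁ > 0` such that for all `s ∈ (0, s₁]` and all
`x ∈ (−L−l−s, −L−l/200) ∪ (L+l/200, L+l+s)`,
`(e^{sΔ}f₀)(x) ≥ f₀(x) + s/(5l²)`. -/
theorem stmt4 (l L : ℝ) (hl : 0 < l) (hlL : l < L) :
    ∃ s₁ > (0 : ℝ), ∀ s ∈ Ioc (0 : ℝ) s₁,
      ∀ x ∈ Ioo (-L - l - s) (-L - l / 200) ∪ Ioo (L + l / 200) (L + l + s),
        f0 l L x + s / (5 * l ^ 2) ≤ heatSG s (f0 l L) x := by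
  refine ⟨min (1/36) (min l (l^2/10^12)), by positivity, ?_⟩
  intro s hsmem x hx
  obtain ⟨hs0, hsle⟩ := hsmem
  have hs1 : s ≤ 1/36 := le_trans hsle (min_le_left _ _)
  have hs2 : s ≤ l := le_trans hsle (le_trans (min_le_right _ _) (min_le_left _ _))
  have hs3 : s ≤ l^2/10^12 := le_trans hsle (le_trans (min_le_right _ _) (min_le_right _ _))
  rcases hx with hx | hx
  · obtain ⟨ha1, ha2⟩ := hx
    have hx1 : L + l/200 < -x := by linarith
    have hx2 : -x < L + l + s := by linarith
    have hk := key_right l L s hl hlL hs0 hs1 hs2 hs3 (-x) hx1 hx2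
    rw [← f0_even l L x hl hlL, ← heatSG_neg l L s x hl hlL]
    exact hk
  · exact key_right l L s hl hlL hs0 hs1 hs2 hs3 x hx.1 hx.2
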